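/- (Hitting time lemma) Let H be the reduced Hamiltonian on the 2n-dimensional column subspace for the graph G_{n-1}' (tridiagonal with entries 1 except a √2 entry between positions n and n+1), assume H has 2n distinct eigenvalues with minimum gap ΔE, and let ε > 0. If τ ≥ 4n/(ε ΔE), then (1/τ) ∫_0^τ |⟨col 2n| e^{-iHt} |col 1⟩|² dt ≥ (1/(2n))(1 − ε). -/

import Mathlib

open Matrix Finset

set_option maxHeartbeats 1000000 in

private lemma aux_spec_htl (n : ℕ) (hn : 0 < n)
    (H U : Matrix (Fin (2 * n)) (Fin (2 * n)) ℂ)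
    (E : Fin (2*n) → ℝ)
    (hU1 : U * star U = 1) (hU2 : star U * U = 1)
    (hspec : H = U * Matrix.diagonal (fun k => (E k : ℂ)) * star U)
    (hcard : (spectrum ℂ H).ncard = 2 * n)
    (ΔE : ℝ) (hΔ : 0 < ΔE)
    (hgap : ∀ x ∈ spectrum ℂ H, ∀ y ∈ spectrum ℂ H, x ≠ y → ΔE ≤ ‖x - y‖) :
    Function.Injective E ∧ (∀ k l, k ≠ l → ΔE ≤ |E k - E l|) := by
  classical
  have hdetU : (Matrix.det U) * Matrix.det (star U) = 1 := by
    rw [← Matrix.det_mul, hU1, Matrix.det_one]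
  have hmem : ∀ z : ℂ, z ∈ spectrum ℂ H ↔ ∃ k, (E k : ℂ) = z := by
    intro z
    rw [spectrum.mem_iff, Matrix.isUnit_iff_isUnit_det]
    have key : (algebraMap ℂ (Matrix (Fin (2*n)) (Fin (2*n)) ℂ)) z - H
        = U * Matrix.diagonal (fun k => z - (E k : ℂ)) * star U := by
      have h1 : Matrix.diagonal (fun k : Fin (2*n) => z - (E k:ℂ))
          = z • (1 : Matrix (Fin (2*n)) (Fin (2*n)) ℂ)
            - Matrix.diagonal (fun k => (E k:ℂ)) := by
        rw [← Matrix.diagonal_one, ← Matrix.diagonal_smul, Matrix.diagonal_sub]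
        congr 1
        funext k
        simp
      rw [Algebra.algebraMap_eq_smul_one, h1, Matrix.mul_sub, Matrix.sub_mul, hspec]
      congr 1
      rw [mul_smul_comm, smul_mul_assoc, Matrix.mul_one, hU1]
    rw [key, Matrix.det_mul, Matrix.det_mul, Matrix.det_diagonal]
    rw [mul_comm, ← mul_assoc, mul_comm (Matrix.det (star U)), hdetU, one_mul]
    rw [isUnit_iff_ne_zero, not_ne_iff, Finset.prod_eq_zero_iff]
    constructor
    · rintro ⟨k, -, hk⟩; exact ⟨k, by linear_combination -hk⟩
    · rintro ⟨k, hk⟩; exact ⟨k, Finset.mem_univ k, by linear_combination -hk⟩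
  have himg : (Finset.univ.image (fun k => ((E k : ℂ)))).card = 2*n := by
    have h : spectrum ℂ H = ↑(Finset.univ.image fun k => ((E k:ℂ))) := by
      ext z
      rw [hmem]
      simp [eq_comm]
    rw [h, Set.ncard_coe_finset] at hcard
    exact hcard
  have hinj : Function.Injective fun k : Fin (2*n) => ((E k:ℂ)) := by
    have h2 : (Finset.univ.image fun k : Fin (2*n) => ((E k:ℂ))).card = (Finset.univ : Finset (Fin (2*n))).card := by
      rw [himg]
      simp
    have h3 := Finset.card_image_iff.mp h2
    intro a b hab
    exact h3 (Finset.mem_coe.mpr (Finset.mem_univ a)) (Finset.mem_coe.mpr (Finset.mem_univ b)) hab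
  have hEinj : Function.Injective E := by
    intro a b hab
    exact hinj (by simp [hab])
  refine ⟨hEinj, fun k l hkl => ?_⟩
  have hk : (E k : ℂ) ∈ spectrum ℂ H := (hmem _).mpr ⟨k, rfl⟩
  have hl : (E l : ℂ) ∈ spectrum ℂ H := (hmem _).mpr ⟨l, rfl⟩
  have hne : (E k : ℂ) ≠ (E l : ℂ) := fun h => hkl (hinj h)
  have := hgap _ hk _ hl hne
  rwa [← Complex.ofReal_sub, Complex.norm_real, Real.norm_eq_abs] at this


private lemma aux_sym_htl (n : ℕ) (hn : 0 < n)
    (H U : Matrix (Fin (2 * n)) (Fin (2 * n)) ℂ)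
    (E : Fin (2*n) → ℝ)
    (hU1 : U * star U = 1) (hU2 : star U * U = 1)
    (hreal : ∀ j k, (starRingEnd ℂ) (H j k) = H j k)
    (hsym : ∀ j k : Fin (2*n), H j k = H k j)
    (heig : ∀ k, H *ᵥ (fun i => U i k) = fun i => (E k : ℂ) * U i k)
    (σ : Fin (2*n) → Fin (2*n))
    (hσσ : ∀ i, σ (σ i) = i)
    (hHσ : ∀ i j, H (σ i) (σ j) = H i j)
    (hEinj : Function.Injective E)
    (e0 e1 : Fin (2*n)) (hσ01 : σ e0 = e1) :
    ∀ k, ‖U e1 k‖ = ‖U e0 k‖ := by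
  classical
  have hcol : ∀ k l, ∑ i, (starRingEnd ℂ) (U i k) * U i l = if k = l then 1 else 0 := by
    intro k l
    have h := congrFun (congrFun hU2 k) l
    rw [Matrix.mul_apply] at h
    simp only [Matrix.star_apply, Matrix.one_apply] at h
    exact h
  have hσsum : ∀ (f : Fin (2*n) → ℂ), ∑ i, f (σ i) = ∑ i, f i := by
    intro f
    exact Equiv.sum_comp ⟨σ, σ, fun i => hσσ i, fun i => hσσ i⟩ f
  intro k
  set w : Fin (2*n) → ℂ := fun i => U (σ i) k with hw
  have hweig : H *ᵥ w = fun i => (E k : ℂ) * w i := by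
    funext i
    show ∑ j, H i j * w j = (E k : ℂ) * w i
    have h1 : ∑ j, H i j * w j = ∑ j, H i (σ j) * w (σ j) := (hσsum fun j => H i j * w j).symm
    rw [h1]
    have h2 : ∀ j, H i (σ j) * w (σ j) = H (σ i) j * U j k := by
      intro j
      rw [hw]
      simp only [hσσ]
      congr 1
      conv_lhs => rw [← hσσ i]
      exact hHσ (σ i) j
    rw [Finset.sum_congr rfl (fun j _ => h2 j)]
    have h3 := congrFun (heig k) (σ i)
    rw [Matrix.mulVec, dotProduct] at h3
    exact h3
  -- coefficients
  set c : Fin (2*n) → ℂ := fun l => ∑ i, (starRingEnd ℂ) (U i l) * w i with hc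
  have hc0 : ∀ l, l ≠ k → c l = 0 := by
    intro l hlk
    have hSl1 : ∑ i, (starRingEnd ℂ) (U i l) * (H *ᵥ w) i = (E k : ℂ) * c l := by
      rw [hweig, hc]
      rw [Finset.mul_sum]
      refine Finset.sum_congr rfl fun i _ => ?_
      ring
    have hSl2 : ∑ i, (starRingEnd ℂ) (U i l) * (H *ᵥ w) i = (E l : ℂ) * c l := by
      have hswap : ∑ i, (starRingEnd ℂ) (U i l) * (H *ᵥ w) i
          = ∑ j, (∑ i, (starRingEnd ℂ) (U i l) * H i j) * w j := by
        simp only [Matrix.mulVec, dotProduct, Finset.mul_sum]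
        rw [Finset.sum_comm]
        refine Finset.sum_congr rfl fun j _ => ?_
        rw [Finset.sum_mul]
        refine Finset.sum_congr rfl fun i _ => ?_
        ring
      have hinner : ∀ j, (∑ i, (starRingEnd ℂ) (U i l) * H i j) = (E l : ℂ) * (starRingEnd ℂ) (U j l) := by
        intro j
        have : (∑ i, (starRingEnd ℂ) (U i l) * H i j)
            = (starRingEnd ℂ) (∑ i, U i l * H j i) := by
          rw [map_sum]
          refine Finset.sum_congr rfl fun i _ => ?_
          rw [_root_.map_mul, hreal, hsym i j]
        rw [this]
        have h4 := congrFun (heig l) j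
        rw [Matrix.mulVec, dotProduct] at h4
        have h5 : ∑ i, U i l * H j i = (E l : ℂ) * U j l := by
          rw [← h4]
          refine Finset.sum_congr rfl fun i _ => ?_
          ring
        rw [h5, _root_.map_mul, Complex.conj_ofReal]
      rw [hswap]
      rw [Finset.sum_congr rfl (fun j _ => by rw [hinner j]), hc]
      rw [Finset.mul_sum]
      refine Finset.sum_congr rfl fun j _ => ?_
      ring
    have : ((E k : ℂ) - (E l : ℂ)) * c l = 0 := by
      rw [sub_mul, ← hSl1, ← hSl2, sub_self]
    rcases mul_eq_zero.mp this with h | h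
    · exfalso
      have : (E k : ℂ) = (E l : ℂ) := by linear_combination h
      exact hlk (hEinj (by exact_mod_cast this)).symm
    · exact h
  have hwck : ∀ i, w i = c k * U i k := by
    set u : Fin (2*n) → ℂ := fun i => w i - c k * U i k with hu
    have hsu : ∀ l, ∑ i, (starRingEnd ℂ) (U i l) * u i = 0 := by
      intro l
      have : ∑ i, (starRingEnd ℂ) (U i l) * u i
          = c l - c k * ∑ i, (starRingEnd ℂ) (U i l) * U i k := by
        rw [hc, Finset.mul_sum, ← Finset.sum_sub_distrib]
        refine Finset.sum_congr rfl fun i _ => ?_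
        rw [hu]
        ring
      rw [this, hcol]
      by_cases hlk : l = k
      · rw [if_pos hlk, mul_one, hlk, sub_self]
      · rw [if_neg hlk, mul_zero, sub_zero, hc0 l hlk]
    have hu0 : u = 0 := by
      have h1 : star U *ᵥ u = 0 := by
        funext l
        have : (star U *ᵥ u) l = ∑ i, (starRingEnd ℂ) (U i l) * u i := by
          rw [Matrix.mulVec, dotProduct]
          refine Finset.sum_congr rfl fun i _ => ?_
          rw [Matrix.star_apply]
          rfl
        rw [this, hsu]
        rfl
      calc u = (U * star U) *ᵥ u := by rw [hU1, Matrix.one_mulVec]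
        _ = U *ᵥ (star U *ᵥ u) := by rw [Matrix.mulVec_mulVec]
        _ = 0 := by rw [h1, Matrix.mulVec_zero]
    intro i
    have := congrFun hu0 i
    rw [hu] at this
    have h2 : w i - c k * U i k = 0 := this
    linear_combination h2
  have hck : ‖c k‖ = 1 := by
    have h1 : ∑ i, (starRingEnd ℂ) (w i) * w i = 1 := by
      have h2 : ∑ i, (starRingEnd ℂ) (w i) * w i
          = ∑ i, (starRingEnd ℂ) (U i k) * U i k := by
        rw [hw]
        exact hσsum fun i => (starRingEnd ℂ) (U i k) * U i k
      rw [h2, hcol, if_pos rfl]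
    have h3 : (starRingEnd ℂ) (c k) * c k * (∑ i, (starRingEnd ℂ) (U i k) * U i k) = 1 := by
      rw [← h1]
      rw [Finset.mul_sum]
      refine Finset.sum_congr rfl fun i _ => ?_
      rw [hwck i, _root_.map_mul]
      ring
    rw [hcol, if_pos rfl, mul_one] at h3
    have h4 : ((Complex.normSq (c k) : ℂ)) = 1 := by
      rw [← Complex.mul_conj (c k), ← h3]
      ring
    have h5 : Complex.normSq (c k) = 1 := by exact_mod_cast h4
    have h6 : ‖c k‖ ^ 2 = 1 := by rw [Complex.sq_norm]; exact h5
    nlinarith [norm_nonneg (c k)]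
  have h7 : U e1 k = c k * U e0 k := by
    have := hwck e0
    rw [hw] at this
    simpa [hσ01] using this
  rw [h7, norm_mul, hck, one_mul]


private lemma aux_int_htl (n : ℕ) (hn : 0 < n)
    (E : Fin (2*n) → ℝ) (a : Fin (2*n) → ℂ)
    (ΔE : ℝ) (hΔ : 0 < ΔE)
    (hgap' : ∀ k l : Fin (2*n), k ≠ l → ΔE ≤ |E k - E l|)
    (ε : ℝ) (hε : 0 < ε)
    (τ : ℝ) (hτ : 4 * n / (ε * ΔE) ≤ τ)
    (hp1 : ∑ k, ‖a k‖ = 1) :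
    (1 / (2 * (n : ℝ))) * (1 - ε)
      ≤ (1 / τ) * ∫ t in (0:ℝ)..τ,
          (‖∑ k, a k * Complex.exp (-(Complex.I * (t:ℂ)) * (E k : ℂ))‖) ^ 2 := by
  classical
  have hτ0 : 0 < τ := lt_of_lt_of_le (by positivity) hτ
  set p : Fin (2*n) → ℝ := fun k => ‖a k‖ with hp
  have hppos : ∀ k, 0 ≤ p k := fun k => norm_nonneg _
  set T : Fin (2*n) → Fin (2*n) → ℝ → ℂ :=
    fun k l t => (a k * (starRingEnd ℂ) (a l))
      * Complex.exp ((Complex.I * ((E l : ℂ) - (E k : ℂ))) * (t:ℂ)) with hT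
  -- pointwise identity
  have hpoint : ∀ t : ℝ, (‖∑ k, a k * Complex.exp (-(Complex.I * (t:ℂ)) * (E k : ℂ))‖) ^ 2
      = ∑ k, ∑ l, (T k l t).re := by
    intro t
    set ψ : ℂ := ∑ k, a k * Complex.exp (-(Complex.I * (t:ℂ)) * (E k : ℂ)) with hψ
    have h1 : (‖ψ‖)^2 = (ψ * (starRingEnd ℂ) ψ).re := by
      rw [Complex.mul_conj, Complex.sq_norm, Complex.ofReal_re]
    have h2 : ψ * (starRingEnd ℂ) ψ = ∑ k, ∑ l, T k l t := by
      rw [hψ, map_sum, Finset.sum_mul_sum]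
      refine Finset.sum_congr rfl fun k _ => Finset.sum_congr rfl fun l _ => ?_
      rw [_root_.map_mul, ← Complex.exp_conj, hT]
      have hc : (starRingEnd ℂ) (-(Complex.I * (t:ℂ)) * (E l : ℂ)) = (Complex.I * (t:ℂ)) * (E l : ℂ) := by
        simp [Complex.conj_I, Complex.conj_ofReal]
      rw [hc]
      have he : Complex.exp (-(Complex.I * (t:ℂ)) * (E k:ℂ)) * Complex.exp (Complex.I * (t:ℂ) * (E l:ℂ))
          = Complex.exp (Complex.I * ((E l:ℂ) - (E k:ℂ)) * (t:ℂ)) := by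
        rw [← Complex.exp_add]
        congr 1
        ring
      beta_reduce
      rw [← he]
      ring
    rw [h1, h2, Complex.re_sum]
    exact Finset.sum_congr rfl fun k _ => (Complex.re_sum _ _)
  -- integrability and continuity
  have hTicont : ∀ k l, Continuous (T k l) := by
    intro k l
    rw [hT]
    fun_prop
  have hTint : ∀ k l, IntervalIntegrable (T k l) MeasureTheory.volume 0 τ :=
    fun k l => (hTicont k l).intervalIntegrable 0 τ
  have hTreint : ∀ k l, IntervalIntegrable (fun t => (T k l t).re) MeasureTheory.volume 0 τ :=
    fun k l => ((Complex.continuous_re.comp (hTicont k l))).intervalIntegrable 0 τ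
  set r : Fin (2*n) → Fin (2*n) → ℝ := fun k l => (∫ t in (0:ℝ)..τ, T k l t).re with hr
  have hint_re : ∀ k l, (∫ t in (0:ℝ)..τ, (T k l t).re) = r k l := by
    intro k l
    exact ContinuousLinearMap.intervalIntegral_comp_comm Complex.reCLM (hTint k l)
  have hFint : (∫ t in (0:ℝ)..τ, (∑ k, ∑ l, (T k l t).re)) = ∑ k, ∑ l, r k l := by
    rw [intervalIntegral.integral_finset_sum
      (f := fun k (t:ℝ) => ∑ l, (T k l t).re) (fun k _ =>
      (continuous_finset_sum _ fun l _ =>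
        Complex.continuous_re.comp (hTicont k l)).intervalIntegrable 0 τ)]
    refine Finset.sum_congr rfl fun k _ => ?_
    rw [intervalIntegral.integral_finset_sum (fun l _ => hTreint k l)]
    exact Finset.sum_congr rfl fun l _ => hint_re k l
  -- diagonal values
  have hdiag : ∀ k, r k k = τ * (p k)^2 := by
    intro k
    have hfun : T k k = fun _ : ℝ => (((p k)^2 : ℝ) : ℂ) := by
      funext t
      rw [hT]
      beta_reduce
      rw [sub_self, mul_zero, zero_mul, Complex.exp_zero, mul_one, Complex.mul_conj]
      norm_cast
      rw [hp]
      exact (Complex.sq_norm _).symm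
    rw [hr]
    beta_reduce
    rw [hfun, intervalIntegral.integral_const, sub_zero, Complex.real_smul,
      ← Complex.ofReal_mul, Complex.ofReal_re]
  -- off-diagonal bound
  have hoff : ∀ k l, k ≠ l → -(2/ΔE * (p k * p l)) ≤ r k l := by
    intro k l hkl
    have hgkl := hgap' k l hkl
    have hωabs : ΔE ≤ |E l - E k| := by rwa [abs_sub_comm]
    have hωne : E l - E k ≠ 0 := by
      intro h0
      rw [h0, abs_zero] at hωabs
      linarith
    set c : ℂ := Complex.I * ((E l : ℂ) - (E k : ℂ)) with hcdef
    have hcast : ((E l : ℂ) - (E k : ℂ)) = ((E l - E k : ℝ) : ℂ) := by push_cast; ring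
    have habsc : ‖c‖ = |E l - E k| := by
      rw [hcdef, norm_mul, Complex.norm_I, one_mul, hcast, Complex.norm_real, Real.norm_eq_abs]
    have hc0 : c ≠ 0 := by
      intro h
      rw [h, norm_zero] at habsc
      exact hωne (abs_eq_zero.mp habsc.symm)
    have hval : (∫ t in (0:ℝ)..τ, T k l t)
        = (a k * (starRingEnd ℂ) (a l)) * ((Complex.exp (c * τ) - 1) / c) := by
      have h1 : (∫ t in (0:ℝ)..τ, T k l t)
          = (a k * (starRingEnd ℂ) (a l)) * (∫ t in (0:ℝ)..τ, Complex.exp (c * (t:ℂ))) := by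
        rw [← intervalIntegral.integral_const_mul]
      rw [h1, integral_exp_mul_complex hc0]
      norm_num
    have habs_int : ‖∫ t in (0:ℝ)..τ, T k l t‖ ≤ p k * p l * (2 / ΔE) := by
      rw [hval, norm_mul, norm_mul]
      have h2 : ‖(starRingEnd ℂ) (a l)‖ = p l := by
        rw [Complex.norm_conj]
      have h3 : ‖(Complex.exp (c * τ) - 1) / c‖ ≤ 2 / ΔE := by
        rw [norm_div]
        have h4 : ‖Complex.exp (c * τ) - 1‖ ≤ 2 := by
          have h5 : ‖Complex.exp (c * τ)‖ = 1 := by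
            rw [Complex.norm_exp]
            have : (c * (τ:ℂ)).re = 0 := by
              rw [hcdef]
              simp [Complex.mul_re, Complex.mul_im]
            rw [this, Real.exp_zero]
          have h7 := norm_add_le (Complex.exp (c * (τ:ℂ))) (-1)
          rw [← sub_eq_add_neg] at h7
          simp only [norm_neg, norm_one] at h7
          rw [h5] at h7
          linarith
        rw [habsc]
        exact div_le_div₀ (by norm_num) h4 hΔ hωabs
      calc ‖a k‖ * ‖(starRingEnd ℂ) (a l)‖
            * ‖(Complex.exp (c * τ) - 1) / c‖
          ≤ ‖a k‖ * ‖(starRingEnd ℂ) (a l)‖ * (2 / ΔE) := by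
            refine mul_le_mul_of_nonneg_left h3 ?_
            positivity
        _ = p k * p l * (2 / ΔE) := by rw [h2, hp]
    have := Complex.abs_re_le_norm (∫ t in (0:ℝ)..τ, T k l t)
    have h6 := neg_abs_le ((∫ t in (0:ℝ)..τ, T k l t).re)
    rw [hr]
    beta_reduce
    nlinarith [abs_nonneg ((∫ t in (0:ℝ)..τ, T k l t).re)]
  -- combine
  have hinner : ∀ k, τ * (p k)^2 - 2/ΔE * p k ≤ ∑ l, r k l := by
    intro k
    rw [← Finset.add_sum_erase _ _ (Finset.mem_univ k), hdiag k]
    have h1 : -(2/ΔE * p k) ≤ ∑ l ∈ Finset.univ.erase k, r k l := by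
      have h2 : ∑ l ∈ Finset.univ.erase k, -(2/ΔE * (p k * p l))
          ≤ ∑ l ∈ Finset.univ.erase k, r k l := by
        refine Finset.sum_le_sum fun l hl => hoff k l ?_
        exact fun h => (Finset.mem_erase.mp hl).1 h.symm
      have h3 : ∑ l ∈ Finset.univ.erase k, -(2/ΔE * (p k * p l))
          = -(2/ΔE * p k * (∑ l ∈ Finset.univ.erase k, p l)) := by
        rw [Finset.mul_sum, ← Finset.sum_neg_distrib]
        refine Finset.sum_congr rfl fun l _ => by ring
      have h4 : ∑ l ∈ Finset.univ.erase k, p l ≤ 1 := by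
        rw [← hp1]
        exact Finset.sum_le_sum_of_subset_of_nonneg (Finset.subset_univ _)
          (fun l _ _ => hppos l)
      have h5 : -(2/ΔE * p k) ≤ -(2/ΔE * p k * (∑ l ∈ Finset.univ.erase k, p l)) := by
        have hnn : 0 ≤ 2/ΔE * p k := by positivity
        nlinarith
      linarith [h2, h3 ▸ h2]
    linarith
  have hsum_bound : τ * (∑ k, (p k)^2) - 2/ΔE ≤ ∑ k, ∑ l, r k l := by
    have h1 : ∑ k, (τ * (p k)^2 - 2/ΔE * p k) ≤ ∑ k, ∑ l, r k l :=
      Finset.sum_le_sum (fun k _ => hinner k)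
    have h2 : ∑ k, (τ * (p k)^2 - 2/ΔE * p k)
        = τ * (∑ k, (p k)^2) - 2/ΔE := by
      rw [Finset.sum_sub_distrib, ← Finset.mul_sum, ← Finset.mul_sum, hp1, mul_one]
    linarith [h2 ▸ h1]
  -- final arithmetic
  have hIeq : (∫ t in (0:ℝ)..τ,
      (‖∑ k, a k * Complex.exp (-(Complex.I * (t:ℂ)) * (E k : ℂ))‖) ^ 2)
      = ∑ k, ∑ l, r k l := by
    rw [intervalIntegral.integral_congr (g := fun t => ∑ k, ∑ l, (T k l t).re)
      (fun t _ => hpoint t), hFint]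
  rw [hIeq]
  have h2n : (0:ℝ) < 2*(n:ℝ) := by positivity
  have hS : 1 ≤ 2*(n:ℝ) * (∑ k, (p k)^2) := by
    have := sq_sum_le_card_mul_sum_sq (s := (Finset.univ : Finset (Fin (2*n)))) (f := p)
    rw [hp1] at this
    simpa using this
  have hεΔ : (0:ℝ) < ε * ΔE := by positivity
  have hτΔ : (0:ℝ) < τ * ΔE := by positivity
  have h4n : 4*(n:ℝ) ≤ τ * (ε * ΔE) := (div_le_iff₀ hεΔ).mp hτ
  have hτε : 2/(τ*ΔE) ≤ ε/(2*(n:ℝ)) := by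
    rw [div_le_div_iff₀ hτΔ h2n]
    nlinarith
  have hSn : 1/(2*(n:ℝ)) ≤ ∑ k, (p k)^2 := by
    rw [div_le_iff₀ h2n]
    nlinarith
  have hstep : (1/(2*(n:ℝ))) * (1-ε) ≤ (1/τ) * (τ * (∑ k, (p k)^2) - 2/ΔE) := by
    have e1 : (1/τ) * (τ * (∑ k, (p k)^2) - 2/ΔE) = (∑ k, (p k)^2) - 2/(τ*ΔE) := by
      field_simp
    rw [e1]
    calc (1/(2*(n:ℝ))) * (1-ε) = 1/(2*(n:ℝ)) - ε/(2*(n:ℝ)) := by ring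
      _ ≤ (∑ k, (p k)^2) - 2/(τ*ΔE) := sub_le_sub hSn hτε
  calc (1/(2*(n:ℝ))) * (1-ε) ≤ (1/τ) * (τ * (∑ k, (p k)^2) - 2/ΔE) := hstep
    _ ≤ (1/τ) * (∑ k, ∑ l, r k l) := by
        refine mul_le_mul_of_nonneg_left hsum_bound ?_
        positivity

/-- Hitting time lemma: for the reduced glued-trees Hamiltonian `H` on the
`2n`-dimensional column subspace (tridiagonal with entries `1` except a `√2` entry
between sites `n` and `n+1`), if `H` has `2n` distinct eigenvalues with minimum gap
`ΔE` and `τ ≥ 4n/(ε ΔE)`, then the time-averaged probability of finding the exit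
satisfies `(1/τ) ∫₀^τ |⟨col 2n| e^{-iHt} |col 1⟩|² dt ≥ (1/(2n))(1 − ε)`. -/
theorem hitting_time_lemma (n : ℕ) (hn : 0 < n)
    (H : Matrix (Fin (2 * n)) (Fin (2 * n)) ℂ)
    (hH : ∀ j k : Fin (2 * n), H j k =
      if j.val + 1 = k.val ∨ k.val + 1 = j.val then
        (if min j.val k.val = n - 1 then (Real.sqrt 2 : ℂ) else 1) else 0)
    (ΔE : ℝ) (hΔ : 0 < ΔE)
    (hcard : (spectrum ℂ H).ncard = 2 * n)
    (hgap : ∀ x ∈ spectrum ℂ H, ∀ y ∈ spectrum ℂ H, x ≠ y → ΔE ≤ ‖x - y‖)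
    (ε : ℝ) (hε : 0 < ε)
    (τ : ℝ) (hτ : 4 * n / (ε * ΔE) ≤ τ) :
    (1 / (2 * (n : ℝ))) * (1 - ε)
      ≤ (1 / τ) * ∫ t in (0 : ℝ)..τ,
          (‖(NormedSpace.exp ((-(Complex.I * (t : ℂ))) • H))
            ⟨2 * n - 1, by omega⟩ ⟨0, by omega⟩‖) ^ 2 := by
  classical
  have hsym : ∀ j k : Fin (2*n), H j k = H k j := by
    intro j k; rw [hH, hH]
    exact if_congr (or_comm) (if_congr (by rw [min_comm]) rfl rfl) rfl
  have hreal : ∀ j k, (starRingEnd ℂ) (H j k) = H j k := by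
    intro j k; rw [hH]; split_ifs <;> simp [Complex.conj_ofReal]
  have hHerm : H.IsHermitian := by
    ext j k
    rw [Matrix.conjTranspose_apply]
    show (starRingEnd ℂ) (H k j) = H j k
    rw [hreal, hsym]
  set σ : Fin (2*n) → Fin (2*n) := fun i => ⟨2*n-1-i.val, by have := i.isLt; omega⟩ with hσ
  have hσσ : ∀ i, σ (σ i) = i := by
    intro i; apply Fin.ext; show 2*n-1-(2*n-1-i.val) = i.val; have := i.isLt; omega
  have hHσ : ∀ i j, H (σ i) (σ j) = H i j := by
    intro i j
    have hi := i.isLt; have hj := j.isLt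
    have hiv : (σ i).val = 2*n-1-i.val := rfl
    have hjv : (σ j).val = 2*n-1-j.val := rfl
    rw [hH, hH]
    by_cases h1 : i.val + 1 = j.val ∨ j.val + 1 = i.val
    · have h2 : (σ i).val + 1 = (σ j).val ∨ (σ j).val + 1 = (σ i).val := by
        rw [hiv, hjv]; omega
      rw [if_pos h2, if_pos h1]
      refine if_congr ?_ rfl rfl
      rw [hiv, hjv]; omega
    · have h2 : ¬((σ i).val + 1 = (σ j).val ∨ (σ j).val + 1 = (σ i).val) := by
        rw [hiv, hjv]; omega
      rw [if_neg h2, if_neg h1]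
  -- spectral data
  set E : Fin (2*n) → ℝ := hHerm.eigenvalues with hE
  set U : Matrix (Fin (2*n)) (Fin (2*n)) ℂ :=
    ((hHerm.eigenvectorUnitary : unitaryGroup (Fin (2*n)) ℂ) : Matrix (Fin (2*n)) (Fin (2*n)) ℂ)
    with hUdef
  have hU1 : U * star U = 1 := Matrix.mem_unitaryGroup_iff.mp (hHerm.eigenvectorUnitary).2
  have hU2 : star U * U = 1 := Matrix.mem_unitaryGroup_iff'.mp (hHerm.eigenvectorUnitary).2
  have hspec : H = U * Matrix.diagonal (fun k => (E k : ℂ)) * star U := hHerm.spectral_theorem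
  have heig : ∀ k, H *ᵥ (fun i => U i k) = fun i => (E k : ℂ) * U i k := by
    intro k
    have h := hHerm.mulVec_eigenvectorBasis k
    have hvk : (fun i => U i k) = ⇑(hHerm.eigenvectorBasis k) := by
      funext i; exact hHerm.eigenvectorUnitary_apply i k
    rw [hvk, h]
    funext i
    simp only [Pi.smul_apply, Complex.real_smul]
    rfl
  set Uu : (Matrix (Fin (2*n)) (Fin (2*n)) ℂ)ˣ := ⟨U, star U, hU1, hU2⟩ with hUu
  have hexp : ∀ c : ℂ, NormedSpace.exp (c • H)
      = U * Matrix.diagonal (fun k => Complex.exp (c * (E k : ℂ))) * star U := by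
    intro c
    have h1 : c • H = (Uu : Matrix _ _ ℂ) * Matrix.diagonal (fun k => c * (E k : ℂ)) * (↑Uu⁻¹ : Matrix _ _ ℂ) := by
      show c • H = U * Matrix.diagonal (fun k => c * (E k:ℂ)) * star U
      rw [hspec, ← smul_mul_assoc, ← mul_smul_comm, ← Matrix.diagonal_smul]
      rfl
    rw [h1, Matrix.exp_units_conj Uu]
    show U * NormedSpace.exp (Matrix.diagonal fun k => c * (E k:ℂ)) * star U = _
    rw [Matrix.exp_diagonal]
    have hds : NormedSpace.exp (fun k => c * (E k : ℂ)) = fun k => Complex.exp (c * (E k : ℂ)) := by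
      funext k
      rw [Pi.coe_exp, Complex.exp_eq_exp_ℂ]
    rw [hds]
  have hentry : ∀ (c : ℂ) (i j : Fin (2*n)), (NormedSpace.exp (c • H)) i j
      = ∑ k, U i k * Complex.exp (c * (E k : ℂ)) * (starRingEnd ℂ) (U j k) := by
    intro c i j
    rw [hexp c, Matrix.mul_apply]
    refine Finset.sum_congr rfl fun k _ => ?_
    rw [Matrix.mul_diagonal, Matrix.star_apply]
    rfl
  obtain ⟨hEinj, hgap'⟩ := aux_spec_htl n hn H U E hU1 hU2 hspec hcard ΔE hΔ hgap
  set e0 : Fin (2*n) := ⟨0, by omega⟩ with he0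
  set e1 : Fin (2*n) := ⟨2*n-1, by omega⟩ with he1
  have hσ01 : σ e0 = e1 := by
    apply Fin.ext
    show 2*n-1-0 = 2*n-1
    omega
  have habs : ∀ k, ‖U e1 k‖ = ‖U e0 k‖ :=
    aux_sym_htl n hn H U E hU1 hU2 hreal hsym heig σ hσσ hHσ hEinj e0 e1 hσ01
  set a : Fin (2*n) → ℂ := fun k => U e1 k * (starRingEnd ℂ) (U e0 k) with ha
  have hp1 : ∑ k, ‖a k‖ = 1 := by
    have hrow : ∑ k, U e0 k * (starRingEnd ℂ) (U e0 k) = 1 := by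
      have h := congrFun (congrFun hU1 e0) e0
      rw [Matrix.mul_apply] at h
      simp only [Matrix.star_apply, Matrix.one_apply_eq] at h
      exact h
    have hcast : ((∑ k, (‖U e0 k‖)^2 : ℝ) : ℂ) = 1 := by
      push_cast
      rw [← hrow]
      refine Finset.sum_congr rfl fun k _ => ?_
      rw [Complex.mul_conj]
      norm_cast
      exact Complex.sq_norm _
    have h2 : ∑ k, (‖U e0 k‖)^2 = 1 := by exact_mod_cast hcast
    rw [← h2]
    refine Finset.sum_congr rfl fun k _ => ?_
    rw [ha]
    beta_reduce
    rw [norm_mul, Complex.norm_conj, habs k]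
    ring
  have hintegrand : ∀ t : ℝ, (NormedSpace.exp ((-(Complex.I * (t:ℂ))) • H)) e1 e0
      = ∑ k, a k * Complex.exp (-(Complex.I * (t:ℂ)) * (E k : ℂ)) := by
    intro t
    rw [hentry]
    refine Finset.sum_congr rfl fun k _ => ?_
    rw [ha]
    ring
  have hrwint : (∫ t in (0:ℝ)..τ,
        (‖(NormedSpace.exp ((-(Complex.I * (t : ℂ))) • H)) e1 e0‖) ^ 2)
      = ∫ t in (0:ℝ)..τ,
        (‖∑ k, a k * Complex.exp (-(Complex.I * (t:ℂ)) * (E k : ℂ))‖) ^ 2 := by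
    refine intervalIntegral.integral_congr fun t _ => ?_
    rw [hintegrand t]
  have hfin := aux_int_htl n hn E a ΔE hΔ hgap' ε hε τ hτ hp1
  calc (1 / (2 * (n : ℝ))) * (1 - ε)
      ≤ (1 / τ) * ∫ t in (0:ℝ)..τ,
          (‖∑ k, a k * Complex.exp (-(Complex.I * (t:ℂ)) * (E k : ℂ))‖) ^ 2 := hfin
    _ = (1 / τ) * ∫ t in (0:ℝ)..τ,
          (‖(NormedSpace.exp ((-(Complex.I * (t : ℂ))) • H)) e1 e0‖) ^ 2 := by
        rw [hrwint]
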